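/- The numerical energy flux is consistent with the exact energy flux q(u,p) = (‖u‖²/2 + p)·u: if i ≠ j and the nodal states coincide, u i = u j = w and p i = p j = q, then F i j = -⟪w, c i j⟫·(‖w‖² + 2·q); in particular, if c i j ≠ 0, the numerical flux Q := -F i j / (2·‖c i j‖) equals (‖w‖²/2 + q)·⟪w, c i j / ‖c i j‖⟫, i.e., the exact energy flux in the direction of the unit vector n i j = c i j / ‖c i j‖. -/

import Mathlib

open scoped RealInnerProductSpace BigOperators

/-- Consistency of the numerical energy flux with the exact energy flux
`q(u,p) = (‖u‖²/2 + p)·u`: for coinciding nodal states the numerical flux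
reduces to the exact flux in the direction `n i j = c i j / ‖c i j‖`. -/
theorem numerical_energy_flux_consistent
    (d N : ℕ) (hd : 1 ≤ d) (hN : 1 ≤ N)
    (u : Fin N → EuclideanSpace ℝ (Fin d)) (p : Fin N → ℝ)
    (c : Fin N → Fin N → EuclideanSpace ℝ (Fin d))
    (hc : ∀ i j, c j i = -c i j)
    (atil dadd dp F : Fin N → Fin N → ℝ)
    (hatil : ∀ i j, atil i j = ⟪((1 : ℝ) / 2) • (u j + u i), c i j⟫)
    (hdadd_symm : ∀ i j, dadd i j = dadd j i)
    (hdp_symm : ∀ i j, dp i j = dp j i)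
    (hF : ∀ i j, i ≠ j → F i j =
      (atil i j / 2) * ‖u j - u i‖ ^ 2
      + (1 / 2) * ⟪c i j, u j - u i⟫ * (p j - p i)
      - ⟪((1 : ℝ) / 2) • (u j + u i), c i j⟫
          * (‖u j‖ ^ 2 / 2 + p j + ‖u i‖ ^ 2 / 2 + p i)
      + dadd i j * (‖u j‖ ^ 2 / 2 - ‖u i‖ ^ 2 / 2)
      + dp i j * (p j ^ 2 / 2 - p i ^ 2 / 2))
    (i j : Fin N) (hij : i ≠ j)
    (w : EuclideanSpace ℝ (Fin d)) (q : ℝ)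
    (hui : u i = w) (huj : u j = w) (hpi : p i = q) (hpj : p j = q) :
    F i j = -⟪w, c i j⟫ * (‖w‖ ^ 2 + 2 * q) ∧
    (c i j ≠ 0 →
      -F i j / (2 * ‖c i j‖) =
        (‖w‖ ^ 2 / 2 + q) * ⟪w, ‖c i j‖⁻¹ • c i j⟫) := by
  have h1 : F i j = -⟪w, c i j⟫ * (‖w‖ ^ 2 + 2 * q) := by
    rw [hF i j hij, hui, huj, hpi, hpj]
    have : ((1:ℝ)/2) • (w + w) = w := by
      rw [smul_add]; module
    rw [this]
    simp only [sub_self, norm_zero, inner_zero_right]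
    ring
  refine ⟨h1, fun hc0 => ?_⟩
  rw [h1, real_inner_smul_right]
  have hn : ‖c i j‖ ≠ 0 := norm_ne_zero_iff.mpr hc0
  field_simp
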